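/- For all positive integers a and b one has E[(Y_a − τ(a))(Y_b − τ(b))] = σ(gcd(a, b)); that is, the covariance of Y_a and Y_b equals the sum of the common divisors of a and b. -/

import Mathlib

open MeasureTheory ProbabilityTheory Finset

open scoped Nat

lemma aux_hasSum_exp (x : ℝ) : HasSum (fun n : ℕ => x ^ n / n !) (Real.exp x) := by
  rw [Real.exp_eq_exp_ℝ]
  exact NormedSpace.expSeries_div_hasSum_exp x

lemma aux_hasSum_mean (x : ℝ) :
    HasSum (fun n : ℕ => (n : ℝ) * x ^ n / n !) (x * Real.exp x) := by
  have h : HasSum (fun n : ℕ => ((n + 1 : ℕ) : ℝ) * x ^ (n + 1) / (n + 1)!)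
      (x * Real.exp x) := by
    have := (aux_hasSum_exp x).mul_left x
    convert this using 2 with n
    case e'_3 => rfl
    rw [Nat.factorial_succ]
    push_cast
    rw [pow_succ]
    have h0 : ((n ! : ℝ)) ≠ 0 := by positivity
    field_simp
  have := (hasSum_nat_add_iff (f := fun n : ℕ => (n : ℝ) * x ^ n / n !) 1).mp h
  simpa using this

lemma aux_hasSum_fac2 (x : ℝ) :
    HasSum (fun n : ℕ => (n : ℝ) * ((n : ℝ) - 1) * x ^ n / n !) (x ^ 2 * Real.exp x) := by
  have h : HasSum
      (fun n : ℕ => ((n + 2 : ℕ) : ℝ) * (((n + 2 : ℕ) : ℝ) - 1) * x ^ (n + 2) / (n + 2)!)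
      (x ^ 2 * Real.exp x) := by
    have := (aux_hasSum_exp x).mul_left (x ^ 2)
    convert this using 2 with n
    case e'_3 => rfl
    rw [Nat.factorial_succ, Nat.factorial_succ]
    push_cast
    have h0 : ((n ! : ℝ)) ≠ 0 := by positivity
    field_simp
    ring
  have := (hasSum_nat_add_iff (f := fun n : ℕ => (n : ℝ) * ((n : ℝ) - 1) * x ^ n / n !) 2).mp h
  simpa [Finset.sum_range_succ] using this

lemma aux_integral_of_hasSum {Ω : Type*} [MeasurableSpace Ω] (P : Measure Ω)
    (W : Ω → ℕ) (hW : Measurable W) (p : ℕ → ℝ) (hp : ∀ n, 0 ≤ p n)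
    (hμ : ∀ n, P {ω | W ω = n} = ENNReal.ofReal (p n))
    (f : ℕ → ℝ) (hf : ∀ n, 0 ≤ f n) (c : ℝ)
    (hs : HasSum (fun n => p n * f n) c) :
    Integrable (fun ω => f (W ω)) P ∧ ∫ ω, f (W ω) ∂P = c := by
  set μ := P.map W with hμdef
  have hsing : ∀ n : ℕ, μ {n} = ENNReal.ofReal (p n) := by
    intro n
    rw [hμdef, Measure.map_apply hW (measurableSet_singleton n)]
    exact hμ n
  have hint : Integrable f μ := by
    refine ⟨measurable_from_nat.aestronglyMeasurable, ?_⟩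
    rw [hasFiniteIntegral_iff_norm, MeasureTheory.lintegral_countable']
    have heq : ∀ n : ℕ, ENNReal.ofReal ‖f n‖ * μ {n} = ENNReal.ofReal (p n * f n) := by
      intro n
      rw [hsing n, Real.norm_of_nonneg (hf n), ← ENNReal.ofReal_mul (hf n), mul_comm]
    rw [tsum_congr heq, ← ENNReal.ofReal_tsum_of_nonneg (fun n => mul_nonneg (hp n) (hf n))
      hs.summable]
    exact ENNReal.ofReal_lt_top
  have hintP : Integrable (fun ω => f (W ω)) P := by
    have := (integrable_map_measure measurable_from_nat.aestronglyMeasurable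
      hW.aemeasurable).mp (by rw [← hμdef]; exact hint)
    exact this
  refine ⟨hintP, ?_⟩
  have h1 : ∫ ω, f (W ω) ∂P = ∫ n, f n ∂μ := by
    rw [hμdef, integral_map hW.aemeasurable measurable_from_nat.aestronglyMeasurable]
  rw [h1, integral_countable' hint]
  have : ∀ n : ℕ, μ.real {n} • f n = p n * f n := by
    intro n
    rw [measureReal_def, hsing n, ENNReal.toReal_ofReal (hp n), smul_eq_mul]
  rw [tsum_congr this, hs.tsum_eq]

/-- Let `{Z k}` be mutually independent Poisson random variables with parameters `1/k`,
and `Y a = ∑_{d ∣ a} d • Z d`. For all positive integers `a, b`,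
`E[(Y a − τ(a))(Y b − τ(b))] = σ(gcd(a, b))`: the covariance of `Y a` and `Y b` equals
the sum of the common divisors of `a` and `b`. -/
theorem stmt5 {Ω : Type*} [MeasurableSpace Ω] (P : Measure Ω) [IsProbabilityMeasure P]
    (Z : ℕ → Ω → ℕ)
    (hmeas : ∀ k, Measurable (Z k))
    (hpois : ∀ k : ℕ, 1 ≤ k → ∀ n : ℕ,
      P {ω | Z k ω = n} =
        ENNReal.ofReal (Real.exp (-(1 / k)) * (1 / k : ℝ) ^ n / n.factorial))
    (hindep : iIndepFun Z P)
    (a b : ℕ) (ha : 0 < a) (hb : 0 < b) :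
    ∫ ω, ((∑ d ∈ a.divisors, (d : ℝ) * (Z d ω : ℝ)) - (a.divisors.card : ℝ)) *
        ((∑ d ∈ b.divisors, (d : ℝ) * (Z d ω : ℝ)) - (b.divisors.card : ℝ)) ∂P
      = ∑ d ∈ (Nat.gcd a b).divisors, (d : ℝ) := by
  -- first and second moments of the Poisson variables
  have key : ∀ k : ℕ, 1 ≤ k →
      (Integrable (fun ω => (Z k ω : ℝ)) P ∧ ∫ ω, (Z k ω : ℝ) ∂P = 1 / k) ∧
      (Integrable (fun ω => (Z k ω : ℝ) ^ 2) P ∧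
        ∫ ω, (Z k ω : ℝ) ^ 2 ∂P = 1 / k + (1 / k) ^ 2) := by
    intro k hk
    set x : ℝ := 1 / k with hxdef
    have hx : 0 < x := by
      have : 0 < (k : ℝ) := by exact_mod_cast hk
      positivity
    set p : ℕ → ℝ := fun n => Real.exp (-x) * x ^ n / n ! with hpdef
    have hp : ∀ n, 0 ≤ p n := fun n => by positivity
    have hμ : ∀ n, P {ω | Z k ω = n} = ENNReal.ofReal (p n) := hpois k hk
    have hexp : Real.exp (-x) * Real.exp x = 1 := by
      rw [← Real.exp_add]; simp
    have hs1 : HasSum (fun n : ℕ => p n * (n : ℝ)) x := by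
      have h := (aux_hasSum_mean x).mul_left (Real.exp (-x))
      have heq : (fun n : ℕ => Real.exp (-x) * ((n : ℝ) * x ^ n / n !))
          = fun n : ℕ => p n * (n : ℝ) := by
        funext n; simp only [hpdef]; ring
      rw [heq] at h
      have hval : Real.exp (-x) * (x * Real.exp x) = x := by
        calc Real.exp (-x) * (x * Real.exp x) = x * (Real.exp (-x) * Real.exp x) := by ring
        _ = x := by rw [hexp, mul_one]
      rwa [hval] at h
    have hs2 : HasSum (fun n : ℕ => p n * (n : ℝ) ^ 2) (x + x ^ 2) := by
      have h := ((aux_hasSum_fac2 x).add (aux_hasSum_mean x)).mul_left (Real.exp (-x))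
      have heq : (fun n : ℕ => Real.exp (-x) *
          ((n : ℝ) * ((n : ℝ) - 1) * x ^ n / n ! + (n : ℝ) * x ^ n / n !))
          = fun n : ℕ => p n * (n : ℝ) ^ 2 := by
        funext n; simp only [hpdef]; ring
      rw [heq] at h
      have hval : Real.exp (-x) * (x ^ 2 * Real.exp x + x * Real.exp x) = x + x ^ 2 := by
        calc Real.exp (-x) * (x ^ 2 * Real.exp x + x * Real.exp x)
            = (x ^ 2 + x) * (Real.exp (-x) * Real.exp x) := by ring
        _ = x + x ^ 2 := by rw [hexp]; ring
      rwa [hval] at h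
    refine ⟨aux_integral_of_hasSum P (Z k) (hmeas k) p hp hμ (fun n => (n : ℝ))
      (fun n => Nat.cast_nonneg n) x hs1,
      aux_integral_of_hasSum P (Z k) (hmeas k) p hp hμ (fun n => (n : ℝ) ^ 2)
      (fun n => by positivity) (x + x ^ 2) hs2⟩
  -- the centered variables
  set X : ℕ → Ω → ℝ := fun d ω => (d : ℝ) * (Z d ω : ℝ) - 1 with hXdef
  have hXint : ∀ d : ℕ, 1 ≤ d → Integrable (X d) P := by
    intro d hd
    exact ((key d hd).1.1.const_mul (d : ℝ)).sub (integrable_const 1)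
  have hXE : ∀ d : ℕ, 1 ≤ d → ∫ ω, X d ω ∂P = 0 := by
    intro d hd
    have hd0 : (d : ℝ) ≠ 0 := by positivity
    have h1 : Integrable (fun ω => (d : ℝ) * (Z d ω : ℝ)) P := (key d hd).1.1.const_mul _
    show ∫ ω, (d : ℝ) * (Z d ω : ℝ) - 1 ∂P = 0
    rw [integral_sub h1 (integrable_const 1), integral_const_mul, (key d hd).1.2, integral_const]
    simp [hd0]
  have hX2eq : ∀ d : ℕ, (fun ω => X d ω * X d ω)
      = fun ω => ((d : ℝ) ^ 2 * (Z d ω : ℝ) ^ 2 - (2 * d) * (Z d ω : ℝ)) + 1 := by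
    intro d; funext ω; simp only [hXdef]; ring
  have hX2int : ∀ d : ℕ, 1 ≤ d → Integrable (fun ω => X d ω * X d ω) P := by
    intro d hd
    rw [hX2eq d]
    exact (((key d hd).2.1.const_mul _).sub ((key d hd).1.1.const_mul _)).add
      (integrable_const 1)
  have hX2E : ∀ d : ℕ, 1 ≤ d → ∫ ω, X d ω * X d ω ∂P = d := by
    intro d hd
    have hd0 : (d : ℝ) ≠ 0 := by positivity
    have h2 : Integrable (fun ω => (d : ℝ) ^ 2 * (Z d ω : ℝ) ^ 2) P :=
      (key d hd).2.1.const_mul _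
    have h3 : Integrable (fun ω => (2 * (d : ℝ)) * (Z d ω : ℝ)) P :=
      (key d hd).1.1.const_mul _
    have h4 : Integrable
        (fun ω => (d : ℝ) ^ 2 * (Z d ω : ℝ) ^ 2 - (2 * (d : ℝ)) * (Z d ω : ℝ)) P := h2.sub h3
    rw [hX2eq d, integral_add h4 (integrable_const 1), integral_sub h2 h3,
      integral_const_mul, integral_const_mul, (key d hd).2.2, (key d hd).1.2, integral_const]
    simp only [measure_univ, probReal_univ, ENNReal.toReal_one, smul_eq_mul, one_mul, mul_one]
    field_simp
    ring
  have hXindep : ∀ d e : ℕ, d ≠ e → IndepFun (X d) (X e) P := by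
    intro d e hde
    have h := (hindep.indepFun hde).comp
      (measurable_from_nat (mα := Real.measurableSpace) (f := fun n : ℕ => (d : ℝ) * n - 1))
      (measurable_from_nat (mα := Real.measurableSpace) (f := fun n : ℕ => (e : ℝ) * n - 1))
    exact h
  have hterm : ∀ d ∈ a.divisors, ∀ e ∈ b.divisors,
      Integrable (fun ω => X d ω * X e ω) P := by
    intro d hd e he
    have hd1 : 1 ≤ d := Nat.pos_of_mem_divisors hd
    have he1 : 1 ≤ e := Nat.pos_of_mem_divisors he
    rcases eq_or_ne d e with rfl | hne
    · exact hX2int d hd1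
    · exact (hXindep d e hne).integrable_mul (hXint d hd1) (hXint e he1)
  have hval : ∀ d ∈ a.divisors, ∀ e ∈ b.divisors,
      ∫ ω, X d ω * X e ω ∂P = if d = e then (d : ℝ) else 0 := by
    intro d hd e he
    have hd1 : 1 ≤ d := Nat.pos_of_mem_divisors hd
    have he1 : 1 ≤ e := Nat.pos_of_mem_divisors he
    rcases eq_or_ne d e with rfl | hne
    · simp [hX2E d hd1]
    · rw [if_neg hne]
      have h : integral P (X d * X e) = integral P (X d) * integral P (X e) :=
        (hXindep d e hne).integral_mul_eq_mul_integral (hXint d hd1).aestronglyMeasurable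
          (hXint e he1).aestronglyMeasurable
      calc ∫ ω, X d ω * X e ω ∂P = integral P (X d) * integral P (X e) := h
        _ = 0 := by rw [hXE d hd1, hXE e he1, mul_zero]
  have hrw : ∀ (c : ℕ) (ω : Ω),
      (∑ d ∈ c.divisors, (d : ℝ) * (Z d ω : ℝ)) - (c.divisors.card : ℝ)
        = ∑ d ∈ c.divisors, X d ω := by
    intro c ω
    rw [hXdef]
    simp [Finset.sum_sub_distrib]
  have hgcd : a.divisors ∩ b.divisors = (Nat.gcd a b).divisors := by
    ext d
    simp only [Finset.mem_inter, Nat.mem_divisors, Nat.dvd_gcd_iff, ne_eq,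
      Nat.gcd_eq_zero_iff, not_and_or]
    constructor
    · rintro ⟨⟨h1, h2⟩, ⟨h3, _⟩⟩
      exact ⟨⟨h1, h3⟩, Or.inl h2⟩
    · rintro ⟨⟨h1, h3⟩, _⟩
      exact ⟨⟨h1, ha.ne'⟩, ⟨h3, hb.ne'⟩⟩
  calc ∫ ω, ((∑ d ∈ a.divisors, (d : ℝ) * (Z d ω : ℝ)) - (a.divisors.card : ℝ)) *
        ((∑ d ∈ b.divisors, (d : ℝ) * (Z d ω : ℝ)) - (b.divisors.card : ℝ)) ∂P
      = ∫ ω, ∑ d ∈ a.divisors, ∑ e ∈ b.divisors, X d ω * X e ω ∂P := by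
        congr 1; funext ω; rw [hrw a ω, hrw b ω, Finset.sum_mul_sum]
    _ = ∑ d ∈ a.divisors, ∑ e ∈ b.divisors, ∫ ω, X d ω * X e ω ∂P := by
        rw [integral_finset_sum _ (fun d hd =>
          integrable_finset_sum _ (fun e he => hterm d hd e he))]
        exact Finset.sum_congr rfl fun d hd =>
          integral_finset_sum _ (fun e he => hterm d hd e he)
    _ = ∑ d ∈ a.divisors, ∑ e ∈ b.divisors, (if d = e then (d : ℝ) else 0) :=
        Finset.sum_congr rfl fun d hd => Finset.sum_congr rfl fun e he => hval d hd e he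
    _ = ∑ d ∈ a.divisors, (if d ∈ b.divisors then (d : ℝ) else 0) :=
        Finset.sum_congr rfl fun d _ => Finset.sum_ite_eq b.divisors d (fun _ => (d : ℝ))
    _ = ∑ d ∈ a.divisors ∩ b.divisors, (d : ℝ) := Finset.sum_ite_mem _ _ _
    _ = ∑ d ∈ (Nat.gcd a b).divisors, (d : ℝ) := by rw [hgcd]
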